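/- Let ν be a probability measure with finite p-th moment on a proper Polish space X, r > 0, and f : X → ℝ upper semicontinuous such that sup{∫ f dμ : μ ∈ B_r(ν)} < ∞ (where the integrals are well-defined for all μ ∈ B_r(ν)). Then there exist x₀ ∈ X and c > 0 such that f(x) ≤ c(1 + d(x, x₀)^p) for all x ∈ X. -/

import Mathlib

open MeasureTheory ENNReal

noncomputable def Couplings {X : Type*} [MeasurableSpace X]
    (μ ν : MeasureTheory.Measure X) : Set (MeasureTheory.Measure (X × X)) :=
  {γ | γ.map Prod.fst = μ ∧ γ.map Prod.snd = ν}

/-- The `p`-Wasserstein distance, defined as the infimum over couplings of the `p`-th root of the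
transport cost `∫ d(x₁,x₂)^p dγ`. -/
noncomputable def Wp {X : Type*} [MeasurableSpace X] [PseudoEMetricSpace X] (p : ℝ)
    (μ ν : MeasureTheory.Measure X) : ℝ≥0∞ :=
  ⨅ γ ∈ Couplings μ ν, (∫⁻ z, edist z.1 z.2 ^ p ∂γ) ^ (1 / p)

open Metric

section pick
variable {X : Type*} [MetricSpace X] [MeasurableSpace X] [BorelSpace X]

noncomputable def pick (x₁ : X) (δ : ℝ) : List X → X → X
  | [] => fun _ => x₁
  | c :: cs => fun x => if dist x c < δ then c else pick x₁ δ cs x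

lemma pick_measurable (x₁ : X) (δ : ℝ) (l : List X) : Measurable (pick x₁ δ l) := by
  induction l with
  | nil => exact measurable_const
  | cons c cs ih =>
    have : MeasurableSet {x : X | dist x c < δ} := by
      simpa [ball] using (measurableSet_ball : MeasurableSet (ball c δ))
    exact Measurable.ite this measurable_const ih

lemma pick_mem (x₁ : X) (δ : ℝ) (l : List X) (x : X) : pick x₁ δ l x ∈ x₁ :: l := by
  induction l with
  | nil => simp [pick]
  | cons c cs ih =>
    by_cases h : dist x c < δ
    · simp [pick, h]
    · simp only [pick, h, if_false]
      rcases List.mem_cons.1 ih with h' | h'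
      · simp [h']
      · simp [h']

lemma pick_dist (x₁ : X) (δ : ℝ) (l : List X) (x : X) (hx : ∃ c ∈ l, dist x c < δ) :
    dist x (pick x₁ δ l x) < δ := by
  induction l with
  | nil => simp at hx
  | cons c cs ih =>
    by_cases h : dist x c < δ
    · simpa [pick, h] using h
    · simp only [pick, h, if_false]
      apply ih
      rcases hx with ⟨d, hd, hxd⟩
      rcases List.mem_cons.1 hd with h' | h'
      · exact absurd (h' ▸ hxd) h
      · exact ⟨d, h', hxd⟩

lemma pick_cases (x₁ : X) (δ : ℝ) (l : List X) (x : X) :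
    dist x (pick x₁ δ l x) < δ ∨ pick x₁ δ l x = x₁ := by
  induction l with
  | nil => simp [pick]
  | cons c cs ih =>
    by_cases h : dist x c < δ
    · left; simpa [pick, h] using h
    · simpa [pick, h] using ih
end pick

lemma two_rpow_bound (p : ℝ) (hp : 0 ≤ p) (a b : ℝ≥0∞) :
    (a + b) ^ p ≤ 2 ^ p * (a ^ p + b ^ p) := by
  have h1 : a + b ≤ 2 * max a b := by
    rcases le_total a b with h | h
    · calc a + b ≤ b + b := by gcongr
        _ = 2 * b := by ring
        _ ≤ 2 * max a b := by gcongr; exact le_max_right a b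
    · calc a + b ≤ a + a := by gcongr
        _ = 2 * a := by ring
        _ ≤ 2 * max a b := by gcongr; exact le_max_left a b
  calc (a + b) ^ p ≤ (2 * max a b) ^ p := ENNReal.rpow_le_rpow h1 hp
    _ = 2 ^ p * (max a b) ^ p := ENNReal.mul_rpow_of_nonneg _ _ hp
    _ ≤ 2 ^ p * (a ^ p + b ^ p) := by
        gcongr
        rcases le_total a b with h | h
        · rw [max_eq_right h]; exact le_add_self
        · rw [max_eq_left h]; exact le_add_right le_rfl

set_option maxHeartbeats 1000000 in
/-- Conversely, if the objective values `∫ f dμ` over the Wasserstein ball `B_r(ν)` (with `r > 0`)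
are bounded above (the integrals being well defined on the ball), then `f` satisfies the growth
condition `f(x) ≤ c (1 + d(x, x₀)^p)` for some `x₀ ∈ X` and `c > 0`. -/
theorem stmt8 {X : Type*} [MetricSpace X] [CompleteSpace X] [TopologicalSpace.SeparableSpace X]
    [ProperSpace X] [MeasurableSpace X] [BorelSpace X]
    (p r : ℝ) (hp : 1 ≤ p) (hr : 0 < r)
    (ν : Measure X) [IsProbabilityMeasure ν]
    (hν : ∃ x₁ : X, ∫⁻ x, edist x x₁ ^ p ∂ν ≠ ⊤)
    (f : X → ℝ) (hf : UpperSemicontinuous f)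
    (hwd : ∀ μ : Measure X, IsProbabilityMeasure μ → Wp p μ ν ≤ ENNReal.ofReal r →
      Integrable (fun x => max (f x) 0) μ ∨ Integrable (fun x => max (-f x) 0) μ)
    (M : ℝ)
    (hbdd : ∀ μ : Measure X, IsProbabilityMeasure μ → Wp p μ ν ≤ ENNReal.ofReal r →
      ∫ x, f x ∂μ ≤ M) :
    ∃ x₀ : X, ∃ c > (0 : ℝ), ∀ x, f x ≤ c * (1 + dist x x₀ ^ p) := by
  clear hwd
  obtain ⟨x₁, hm⟩ := hν
  have hp0 : (0 : ℝ) < p := lt_of_lt_of_le one_pos hp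
  have hrp : (0 : ℝ) < r ^ p := Real.rpow_pos_of_pos hr p
  set m : ℝ≥0∞ := ∫⁻ x, edist x x₁ ^ p ∂ν with hm_def
  obtain ⟨m', hm'_def⟩ : ∃ z : ℝ, z = m.toReal := ⟨_, rfl⟩
  have hm'0 : 0 ≤ m' := hm'_def ▸ ENNReal.toReal_nonneg
  have hmm' : m = ENNReal.ofReal m' := by rw [hm'_def]; exact (ENNReal.ofReal_toReal hm).symm
  have hfm : Measurable f := hf.measurable
  set g : X → ℝ≥0∞ := fun x => edist x x₁ ^ p with hg_def
  have hgm : Measurable g :=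
    ENNReal.continuous_rpow_const.measurable.comp (measurable_edist_left)
  -- tail bound
  obtain ⟨R, hR⟩ : ∃ R : ℕ, ∫⁻ x, ((closedBall x₁ (R : ℝ))ᶜ).indicator g x ∂ν
      ≤ ENNReal.ofReal (r ^ p / 4) := by
    have hdom : Filter.Tendsto (fun n : ℕ => ∫⁻ x, ((closedBall x₁ (n : ℝ))ᶜ).indicator g x ∂ν)
        Filter.atTop (nhds (∫⁻ _, (0 : ℝ≥0∞) ∂ν)) := by
      apply tendsto_lintegral_of_dominated_convergence g
        (fun n => hgm.indicator measurableSet_closedBall.compl)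
        (fun n => Filter.Eventually.of_forall fun x => Set.indicator_le_self _ _ x) hm
      refine Filter.Eventually.of_forall fun x => ?_
      have hev : ∀ᶠ n : ℕ in Filter.atTop, ((closedBall x₁ (n : ℝ))ᶜ).indicator g x = 0 := by
        filter_upwards [Filter.eventually_ge_atTop ⌈dist x x₁⌉₊] with n hn
        apply Set.indicator_of_notMem
        simp only [Set.notMem_compl_iff, mem_closedBall]
        exact (Nat.le_ceil _).trans (by exact_mod_cast hn)
      exact Filter.Tendsto.congr' (hev.mono fun n h => h.symm) tendsto_const_nhds
    rw [lintegral_zero] at hdom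
    have := hdom.eventually_lt_const
      (show (0 : ℝ≥0∞) < ENNReal.ofReal (r ^ p / 4) from ENNReal.ofReal_pos.2 (by positivity))
    exact (this.exists).imp fun n h => h.le
  set K : Set X := closedBall x₁ (R : ℝ) with hK_def
  set δ : ℝ := r / 4 with hδ_def
  have hδ0 : 0 < δ := by positivity
  have hδp : δ ^ p ≤ r ^ p / 4 := by
    have h4 : (4 : ℝ) ≤ 4 ^ p := by
      nth_rewrite 1 [show (4:ℝ) = 4 ^ (1:ℝ) by norm_num]
      exact Real.rpow_le_rpow_of_exponent_le (by norm_num) hp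
    rw [hδ_def, Real.div_rpow hr.le (by norm_num)]
    exact div_le_div_of_nonneg_left hrp.le (by norm_num) h4
  -- finite cover of K
  obtain ⟨t, -, tfin, tcov⟩ := (isCompact_closedBall x₁ (R : ℝ)).finite_cover_balls hδ0
  set l : List X := tfin.toFinset.toList with hl_def
  set T : X → X := pick x₁ δ l with hT_def
  have hTmeas : Measurable T := pick_measurable x₁ δ l
  have hcover : ∀ x ∈ K, ∃ c ∈ l, dist x c < δ := by
    intro x hx
    obtain ⟨c, hc, hxc⟩ := Set.mem_iUnion₂.1 (tcov hx)
    exact ⟨c, by simp [hl_def, tfin.mem_toFinset, hc], mem_ball.1 hxc⟩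
  -- pointwise transport cost bound
  have hcase : ∀ x, dist x (T x) < δ → edist (T x) x ^ p ≤ ENNReal.ofReal (δ ^ p) := by
    intro x hdx
    calc edist (T x) x ^ p = ENNReal.ofReal (dist (T x) x ^ p) := by
          rw [edist_dist, ENNReal.ofReal_rpow_of_nonneg dist_nonneg hp0.le]
      _ ≤ ENNReal.ofReal (δ ^ p) := ENNReal.ofReal_le_ofReal
          (Real.rpow_le_rpow dist_nonneg (by rw [dist_comm]; exact hdx.le) hp0.le)
  have hTx : ∀ x, edist (T x) x ^ p ≤ ENNReal.ofReal (δ ^ p) + (Kᶜ).indicator g x := by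
    intro x
    by_cases hxK : x ∈ K
    · exact (hcase x (pick_dist x₁ δ l x (hcover x hxK))).trans le_self_add
    · rcases pick_cases x₁ δ l x with hdx | hx1
      · exact (hcase x hdx).trans le_self_add
      · have : edist (T x) x ^ p = (Kᶜ).indicator g x := by
          rw [Set.indicator_of_mem (Set.mem_compl hxK), hT_def, hx1, hg_def, edist_comm]
        rw [this]
        exact le_add_self
  have cost_T : ∫⁻ x, edist (T x) x ^ p ∂ν ≤ ENNReal.ofReal (r ^ p / 2) := by
    calc ∫⁻ x, edist (T x) x ^ p ∂ν
        ≤ ∫⁻ x, (ENNReal.ofReal (δ ^ p) + (Kᶜ).indicator g x) ∂ν := lintegral_mono hTx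
      _ = ENNReal.ofReal (δ ^ p) * ν Set.univ + ∫⁻ x, (Kᶜ).indicator g x ∂ν := by
          rw [lintegral_add_left measurable_const, lintegral_const]
      _ ≤ ENNReal.ofReal (r ^ p / 4) + ENNReal.ofReal (r ^ p / 4) := by
          rw [measure_univ, mul_one]
          exact add_le_add (ENNReal.ofReal_le_ofReal hδp) hR
      _ = ENNReal.ofReal (r ^ p / 2) := by
          rw [← ENNReal.ofReal_add (by positivity) (by positivity)]
          ring_nf
  -- fixed finite quantities
  set B : ℝ := ((x₁ :: l).map (fun c => |f c|)).sum with hB_def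
  have hB : ∀ x, ‖f (T x)‖ ≤ B := by
    intro x
    rw [Real.norm_eq_abs]
    apply List.single_le_sum (l := (x₁ :: l).map (fun c => |f c|))
      (fun y hy => by
        obtain ⟨c, -, rfl⟩ := List.mem_map.1 hy
        exact abs_nonneg _)
    exact List.mem_map.2 ⟨T x, pick_mem x₁ δ l x, rfl⟩
  have hfT_int : Integrable (fun x => f (T x)) ν :=
    Integrable.mono' (integrable_const B) ((hfm.comp hTmeas).aestronglyMeasurable)
      (Filter.Eventually.of_forall hB)
  have hint1 : Integrable f (Measure.map T ν) :=
    (integrable_map_measure hfm.aestronglyMeasurable hTmeas.aemeasurable).2 hfT_int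
  set S : ℝ := ∫ x, f (T x) ∂ν with hS_def
  -- constants
  obtain ⟨C₀, hC₀_def⟩ : ∃ z : ℝ, z = 2 + (2 / r ^ p) * (2 ^ p * (m' + 1)) := ⟨_, rfl⟩
  have hC₀2 : 2 ≤ C₀ := by
    have : 0 ≤ (2 / r ^ p) * (2 ^ p * (m' + 1)) := by positivity
    rw [hC₀_def]; linarith
  refine ⟨x₁, (|M| + |S| + 1) * C₀, by positivity, ?_⟩
  intro y
  obtain ⟨d, hd_def⟩ : ∃ z : ℝ, z = dist y x₁ := ⟨_, rfl⟩
  have hd0 : 0 ≤ d := hd_def ▸ dist_nonneg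
  rw [← hd_def]
  have hdp : 0 ≤ d ^ p := Real.rpow_nonneg hd0 p
  obtain ⟨A, hA_def⟩ : ∃ z : ℝ, z = r ^ p / 2 := ⟨_, rfl⟩
  have hA0 : 0 < A := by rw [hA_def]; positivity
  have h2p : (0:ℝ) < 2 ^ p := Real.rpow_pos_of_pos (by norm_num) p
  obtain ⟨D, hD_def⟩ : ∃ z : ℝ, z = 2 ^ p * (d ^ p + m' + 1) := ⟨_, rfl⟩
  have hD0 : 0 < D := by rw [hD_def]; positivity
  obtain ⟨ε, hε_def⟩ : ∃ z : ℝ, z = min (1/2) (A / D) := ⟨_, rfl⟩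
  have hεAD : ε ≤ A / D := hε_def ▸ min_le_right _ _
  have hε0 : 0 < ε := hε_def ▸ lt_min (by norm_num) (div_pos hA0 hD0)
  have hε1 : ε ≤ 1/2 := hε_def ▸ min_le_left _ _
  -- the perturbed measure and coupling
  set μ : Measure X := ENNReal.ofReal (1 - ε) • Measure.map T ν
      + ENNReal.ofReal ε • Measure.dirac y with hμ_def
  haveI hmapProb : IsProbabilityMeasure (Measure.map T ν) :=
    Measure.isProbabilityMeasure_map hTmeas.aemeasurable
  have hsum1 : ENNReal.ofReal (1 - ε) + ENNReal.ofReal ε = 1 := by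
    rw [← ENNReal.ofReal_add (by linarith) hε0.le]
    norm_num
  haveI hμProb : IsProbabilityMeasure μ := by
    constructor
    simp only [hμ_def, Measure.coe_add, Pi.add_apply, Measure.coe_smul, Pi.smul_apply,
      smul_eq_mul, measure_univ, mul_one]
    exact hsum1
  set γ : Measure (X × X) := ENNReal.ofReal (1 - ε) • Measure.map (fun x => (T x, x)) ν
      + ENNReal.ofReal ε • Measure.map (fun x => (y, x)) ν with hγ_def
  have hTp : Measurable (fun x => (T x, x)) := hTmeas.prodMk measurable_id
  have hyp : Measurable (fun x : X => (y, x)) := measurable_const.prodMk measurable_id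
  have hγmem : γ ∈ Couplings μ ν := by
    constructor
    · rw [hγ_def, Measure.map_add _ _ measurable_fst, Measure.map_smul, Measure.map_smul,
        Measure.map_map measurable_fst hTp,
        Measure.map_map measurable_fst hyp]
      have h1 : (Prod.fst ∘ fun x => (T x, x)) = T := rfl
      have h2 : (Prod.fst ∘ fun x : X => (y, x)) = fun _ => y := rfl
      rw [h1, h2, Measure.map_const, measure_univ, one_smul, hμ_def]
    · rw [hγ_def, Measure.map_add _ _ measurable_snd, Measure.map_smul, Measure.map_smul,
        Measure.map_map measurable_snd hTp,
        Measure.map_map measurable_snd hyp]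
      have h1 : (Prod.snd ∘ fun x => (T x, x)) = id := rfl
      have h2 : (Prod.snd ∘ fun x : X => (y, x)) = id := rfl
      rw [h1, h2, Measure.map_id, ← add_smul, hsum1, one_smul]
  have hcostmeas : Measurable (fun z : X × X => edist z.1 z.2 ^ p) :=
    ENNReal.continuous_rpow_const.measurable.comp (measurable_fst.edist measurable_snd)
  -- cost of the Dirac part
  have h2pe : ((2 : ℝ≥0∞) ^ p) = ENNReal.ofReal (2 ^ p) := by
    rw [← ENNReal.ofReal_rpow_of_nonneg (by norm_num) hp0.le, ENNReal.ofReal_ofNat]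
  have εcost : ENNReal.ofReal ε * ∫⁻ x, edist y x ^ p ∂ν ≤ ENNReal.ofReal A := by
    have hpt : ∀ x, edist y x ^ p ≤ 2 ^ p * (edist y x₁ ^ p + edist x x₁ ^ p) := by
      intro x
      calc edist y x ^ p ≤ (edist y x₁ + edist x₁ x) ^ p :=
            ENNReal.rpow_le_rpow (edist_triangle _ _ _) hp0.le
        _ ≤ 2 ^ p * (edist y x₁ ^ p + edist x₁ x ^ p) := two_rpow_bound p hp0.le _ _
        _ = 2 ^ p * (edist y x₁ ^ p + edist x x₁ ^ p) := by rw [edist_comm x₁ x]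
    have h1 : ∫⁻ x, edist y x ^ p ∂ν ≤ 2 ^ p * (ENNReal.ofReal (d ^ p) + m) := by
      calc ∫⁻ x, edist y x ^ p ∂ν
          ≤ ∫⁻ x, 2 ^ p * (edist y x₁ ^ p + edist x x₁ ^ p) ∂ν := lintegral_mono hpt
        _ = 2 ^ p * (edist y x₁ ^ p * ν Set.univ + ∫⁻ x, edist x x₁ ^ p ∂ν) := by
            rw [lintegral_const_mul _ (f := fun x => edist y x₁ ^ p + edist x x₁ ^ p) (measurable_const.add hgm),
              lintegral_add_left measurable_const, lintegral_const]
        _ = 2 ^ p * (ENNReal.ofReal (d ^ p) + m) := by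
            rw [measure_univ, mul_one, edist_dist,
              ENNReal.ofReal_rpow_of_nonneg dist_nonneg hp0.le, ← hd_def, ← hm_def]
    have hXle : 2 ^ p * (d ^ p + m') ≤ D := by rw [hD_def]; nlinarith
    calc ENNReal.ofReal ε * ∫⁻ x, edist y x ^ p ∂ν
        ≤ ENNReal.ofReal ε * (2 ^ p * (ENNReal.ofReal (d ^ p) + m)) := mul_le_mul_right h1 _
      _ = ENNReal.ofReal (ε * (2 ^ p * (d ^ p + m'))) := by
          rw [hmm', ← ENNReal.ofReal_add hdp hm'0, h2pe,
            ← ENNReal.ofReal_mul (by positivity), ← ENNReal.ofReal_mul hε0.le]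
      _ ≤ ENNReal.ofReal A := by
          apply ENNReal.ofReal_le_ofReal
          calc ε * (2 ^ p * (d ^ p + m'))
              ≤ (A / D) * (2 ^ p * (d ^ p + m')) :=
                mul_le_mul_of_nonneg_right hεAD (by positivity)
            _ ≤ (A / D) * D := mul_le_mul_of_nonneg_left hXle (by positivity)
            _ = A := div_mul_cancel₀ A hD0.ne'
  have hWp : Wp p μ ν ≤ ENNReal.ofReal r := by
    have hcost : ∫⁻ z, edist z.1 z.2 ^ p ∂γ ≤ ENNReal.ofReal (r ^ p) := by
      rw [hγ_def, lintegral_add_measure, lintegral_smul_measure, lintegral_smul_measure,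
        lintegral_map hcostmeas hTp,
        lintegral_map hcostmeas hyp]
      calc ENNReal.ofReal (1 - ε) * ∫⁻ x, edist (T x, x).1 (T x, x).2 ^ p ∂ν
            + ENNReal.ofReal ε * ∫⁻ x, edist (y, x).1 (y, x).2 ^ p ∂ν
          ≤ 1 * ENNReal.ofReal (r ^ p / 2) + ENNReal.ofReal A := by
            exact add_le_add (mul_le_mul' (ENNReal.ofReal_le_one.2 (by linarith)) cost_T) εcost
        _ = ENNReal.ofReal (r ^ p) := by
            rw [one_mul, hA_def, ← ENNReal.ofReal_add (by positivity) (by positivity)]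
            ring_nf
    refine (iInf₂_le γ hγmem).trans ?_
    calc (∫⁻ z, edist z.1 z.2 ^ p ∂γ) ^ (1 / p)
        ≤ (ENNReal.ofReal (r ^ p)) ^ (1 / p) := ENNReal.rpow_le_rpow hcost (by positivity)
      _ = ENNReal.ofReal ((r ^ p) ^ (1 / p)) :=
          ENNReal.ofReal_rpow_of_nonneg (by positivity) (by positivity)
      _ = ENNReal.ofReal r := by
          rw [← Real.rpow_mul hr.le, mul_one_div_cancel hp0.ne', Real.rpow_one]
  -- integral computation
  have hint2 : Integrable f (Measure.dirac y) :=
    (integrable_const (f y)).congr (ae_eq_dirac f).symm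
  have hI : ∫ x, f x ∂μ = (1 - ε) * S + ε * f y := by
    rw [hμ_def, integral_add_measure (hint1.smul_measure ofReal_ne_top)
        (hint2.smul_measure ofReal_ne_top), integral_smul_measure, integral_smul_measure,
      ENNReal.toReal_ofReal (by linarith), ENNReal.toReal_ofReal hε0.le,
      integral_map hTmeas.aemeasurable hfm.aestronglyMeasurable, integral_dirac]
    simp [smul_eq_mul, hS_def]
  have hMS : (1 - ε) * S + ε * f y ≤ M := hI ▸ hbdd μ hμProb hWp
  clear_value m g K δ l T B S μ γ
  -- final arithmetic
  have hεC : 1 ≤ ε * (C₀ * (1 + d ^ p)) := by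
    rcases min_cases (1/2 : ℝ) (A / D) with ⟨hmin, -⟩ | ⟨hmin, -⟩
    · rw [hε_def, hmin]
      nlinarith [hC₀2, hdp, mul_nonneg (sub_nonneg.2 hC₀2) hdp]
    · have hkey : A * ((2 / r ^ p) * (2 ^ p * (m' + 1))) = 2 ^ p * (m' + 1) := by
        rw [hA_def]; field_simp
      rw [hε_def, hmin, div_mul_eq_mul_div, le_div_iff₀ hD0, one_mul, hC₀_def, hD_def]
      have hexp : A * ((2 + (2 / r ^ p) * (2 ^ p * (m' + 1))) * (1 + d ^ p))
          = 2 * A * (1 + d ^ p) + (A * ((2 / r ^ p) * (2 ^ p * (m' + 1)))) * (1 + d ^ p) := by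
        ring
      rw [hexp, hkey]
      nlinarith [mul_nonneg (mul_nonneg h2p.le hm'0) hdp, mul_nonneg hA0.le hdp, hA0, hdp,
        h2p, hm'0]
  have hfy : f y ≤ (|M| + |S|) / ε := by
    rw [le_div_iff₀ hε0]
    nlinarith [le_abs_self M, neg_abs_le S, abs_nonneg S, abs_nonneg M]
  have hdiv : (|M| + |S|) / ε ≤ (|M| + |S|) * (C₀ * (1 + d ^ p)) := by
    rw [div_le_iff₀ hε0]
    nlinarith [abs_nonneg M, abs_nonneg S]
  calc f y ≤ (|M| + |S|) / ε := hfy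
    _ ≤ (|M| + |S|) * (C₀ * (1 + d ^ p)) := hdiv
    _ ≤ (|M| + |S| + 1) * C₀ * (1 + d ^ p) := by nlinarith [abs_nonneg M, abs_nonneg S]
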